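/- Let (Ω, ℙ) be a probability space and (X_i)_{i ∈ ℕ} a sequence of independent random variables where each X_i has the Binomial(i, 1/2) distribution (law PMF.binomial (1/2) i). Then the random series ∑_{i=0}^∞ (i+1)·2^{X_i − i} converges almost surely; equivalently, ℙ-almost every ω satisfies Summable (fun i ↦ (i+1)·2^{X_i(ω) − i}). (This is the almost-sure convergence claim established via Kolmogorov's two-series theorem in the proof of Proposition 1 / Lemma 1.) -/

import Mathlib

open MeasureTheory ENNReal

lemma ofReal_term (i k : ℕ) :
    ENNReal.ofReal (((i : ℝ) + 1) * (2 : ℝ) ^ ((k : ℤ) - (i : ℤ))) =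
      ((i : ℝ≥0∞) + 1) * 2 ^ k * (2 ^ i)⁻¹ := by
  have h2 : (2 : ℝ) ^ ((k : ℤ) - (i : ℤ)) = 2 ^ k / 2 ^ i := by
    rw [zpow_sub₀ (by norm_num)]
    norm_num
  rw [h2, ENNReal.ofReal_mul (by positivity), div_eq_mul_inv,
    ENNReal.ofReal_mul (by positivity), ENNReal.ofReal_inv_of_pos (by positivity),
    ENNReal.ofReal_pow (by norm_num), ENNReal.ofReal_pow (by norm_num)]
  norm_num [← mul_assoc]
  rw [ENNReal.ofReal_add (Nat.cast_nonneg i) zero_le_one, ENNReal.ofReal_natCast,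
    ENNReal.ofReal_one]

lemma sum_two_pow_choose (i : ℕ) :
    ∑ k : Fin (i + 1), (2 : ℝ≥0∞) ^ (k : ℕ) * (i.choose k) = 3 ^ i := by
  rw [Fin.sum_univ_eq_sum_range (fun k => (2 : ℝ≥0∞) ^ k * (i.choose k))]
  have h := add_pow (2 : ℝ≥0∞) 1 i
  simp only [one_pow, mul_one] at h
  norm_num at h
  rw [← h]

lemma binom_sum_eq (i : ℕ) :
    ∑ k : Fin (i + 1),
        (((i : ℝ≥0∞) + 1) * 2 ^ (k : ℕ) * (2 ^ i)⁻¹) *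
          (PMF.binomial (1 / 2) (by norm_num) i k) =
      ENNReal.ofReal (((i : ℝ) + 1) * (3 / 4 : ℝ) ^ i) := by
  have hhalf : (1 : ℝ≥0∞) - 1 / 2 = 1 / 2 := by
    rw [one_div]; exact ENNReal.one_sub_inv_two
  have hterm : ∀ k : Fin (i + 1),
      (((i : ℝ≥0∞) + 1) * 2 ^ (k : ℕ) * (2 ^ i)⁻¹) *
          (PMF.binomial (1 / 2) (by norm_num) i k) =
        (((i : ℝ≥0∞) + 1) * (2 ^ i)⁻¹ * (1 / 2 : ℝ≥0∞) ^ i) *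
          (2 ^ (k : ℕ) * (i.choose k)) := by
    intro k
    have hc : ((1 / 2 : NNReal) : ℝ≥0∞) = 1 / 2 := by
      rw [ENNReal.coe_div (by norm_num), ENNReal.coe_one, ENNReal.coe_ofNat]
    rw [PMF.binomial_apply, hc, hhalf, Fin.val_last, ← pow_add,
      Nat.add_sub_cancel' (Nat.lt_succ_iff.mp k.isLt)]
    ring
  rw [Finset.sum_congr rfl (fun k _ => hterm k), ← Finset.mul_sum, sum_two_pow_choose]
  have hr : ENNReal.ofReal (((i : ℝ) + 1) * (3 / 4 : ℝ) ^ i) =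
      ((i : ℝ≥0∞) + 1) * (3 / 4 : ℝ≥0∞) ^ i := by
    rw [ENNReal.ofReal_mul (by positivity), ENNReal.ofReal_pow (by norm_num),
      ENNReal.ofReal_add (Nat.cast_nonneg i) zero_le_one, ENNReal.ofReal_natCast,
      ENNReal.ofReal_one]
    norm_num
    rw [ENNReal.ofReal_div_of_pos (by norm_num)]
    norm_num
  rw [hr]
  have h34 : (3 / 4 : ℝ≥0∞) ^ i = 3 ^ i * (4 ^ i)⁻¹ := by
    rw [div_eq_mul_inv, mul_pow, ← ENNReal.inv_pow]
  have h4 : ((2 : ℝ≥0∞) ^ i)⁻¹ * (1 / 2 : ℝ≥0∞) ^ i = (4 ^ i)⁻¹ := by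
    rw [one_div, ← ENNReal.inv_pow, ← ENNReal.mul_inv (by simp) (by simp), ← mul_pow]
    norm_num
  rw [h34, show ((i : ℝ≥0∞) + 1) * (2 ^ i)⁻¹ * (1 / 2 : ℝ≥0∞) ^ i * 3 ^ i =
    ((i : ℝ≥0∞) + 1) * 3 ^ i * ((2 ^ i)⁻¹ * (1 / 2 : ℝ≥0∞) ^ i) from by ring, h4]
  ring

lemma summable_aux : Summable (fun i : ℕ => ((i : ℝ) + 1) * (3 / 4 : ℝ) ^ i) := by
  have h1 : Summable (fun i : ℕ => (i : ℝ) * (3 / 4 : ℝ) ^ i) := by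
    have := summable_pow_mul_geometric_of_norm_lt_one (R := ℝ) 1
      (r := (3 / 4 : ℝ)) (by rw [Real.norm_eq_abs]; rw [abs_of_pos] <;> norm_num)
    simpa using this
  have h2 : Summable (fun i : ℕ => (3 / 4 : ℝ) ^ i) :=
    summable_geometric_of_lt_one (by norm_num) (by norm_num)
  simpa [add_mul] using h1.add h2

/-- Almost-sure convergence (via Kolmogorov's two-series theorem) of the random
series `∑_i (i+1)·2^{X_i − i}` where the `X_i` are independent and
`X_i ~ Binomial(i, 1/2)` (proof of Proposition 1 / Lemma 1). -/
theorem binomial_series_summable_ae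
    {Ω : Type*} [MeasurableSpace Ω] (μ : Measure Ω) [IsProbabilityMeasure μ]
    (X : (i : ℕ) → Ω → Fin (i + 1))
    (hmeas : ∀ i, Measurable (X i))
    (hindep : ProbabilityTheory.iIndepFun X μ)
    (hlaw : ∀ i, Measure.map (X i) μ = (PMF.binomial (1 / 2) (by norm_num) i).toMeasure) :
    ∀ᵐ ω ∂μ, Summable (fun i : ℕ =>
      ((i : ℝ) + 1) * (2 : ℝ) ^ (((X i ω : ℕ) : ℤ) - (i : ℤ))) := by
  set g : (i : ℕ) → Fin (i + 1) → ℝ≥0∞ :=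
    fun i k => ((i : ℝ≥0∞) + 1) * 2 ^ (k : ℕ) * (2 ^ i)⁻¹ with hg
  have hfm : ∀ i, Measurable (fun ω => g i (X i ω)) :=
    fun i => (measurable_of_finite (g i)).comp (hmeas i)
  have hint : ∀ i, ∫⁻ ω, g i (X i ω) ∂μ =
      ENNReal.ofReal (((i : ℝ) + 1) * (3 / 4 : ℝ) ^ i) := by
    intro i
    rw [← lintegral_map (measurable_of_finite (g i)) (hmeas i), hlaw i,
      lintegral_fintype]
    have hsing : ∀ k : Fin (i + 1),
        ((PMF.binomial (1 / 2) (by norm_num) i).toMeasure : Measure (Fin (i + 1))) {k} =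
          PMF.binomial (1 / 2) (by norm_num) i k :=
      fun k => PMF.toMeasure_apply_singleton _ k (measurableSet_singleton k)
    rw [Finset.sum_congr rfl (fun k _ => by rw [hsing k])]
    exact binom_sum_eq i
  have key : ∫⁻ ω, ∑' i, g i (X i ω) ∂μ ≠ ∞ := by
    rw [lintegral_tsum (fun i => (hfm i).aemeasurable)]
    simp_rw [hint]
    rw [← ENNReal.ofReal_tsum_of_nonneg (fun i => by positivity) summable_aux]
    exact ENNReal.ofReal_ne_top
  have hae := ae_lt_top (by exact Measurable.ennreal_tsum hfm) key
  filter_upwards [hae] with ω hω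
  have h1 : ∑' i, g i (X i ω) ≠ ∞ := hω.ne
  have h2 := ENNReal.summable_toReal h1
  have h3 : (fun i => (g i (X i ω)).toReal) =
      fun i : ℕ => ((i : ℝ) + 1) * (2 : ℝ) ^ (((X i ω : ℕ) : ℤ) - (i : ℤ)) := by
    funext i
    simp only [hg]
    rw [← ofReal_term i (X i ω), ENNReal.toReal_ofReal (by positivity)]
  rwa [h3] at h2
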